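/- On R^4 with the Poisson brackets of A_{4,3} (P: P^{12}=p12 e^{x4}, P^{14}=p14 e^{x4}, P^{23}=p23; P': P'^{12}=e^{x4}(p'_{12}+a23 x3+a24 x4+a33 x3 x4), P'^{13}=a33 e^{x4} x3, P'^{14}=a33 e^{x4} x4, P'^{23}=a53 x3 + (a33 p23/p14) x4), assume p14 p23 ≠ 0. Then H1 = a53 x3/p23 + 2 a33 x4/p14 and H2 = (1/2)(a33^2 x4^2/p14^2 + (a53 x3/p23 + a33 x4/p14)^2) are in involution with respect to both brackets: {H1,H2} = {H1,H2}' = 0. -/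

import Mathlib

open scoped BigOperators

noncomputable def pd {m : ℕ} (μ : Fin m) (f : (Fin m → ℝ) → ℝ) (x : Fin m → ℝ) : ℝ :=
  fderiv ℝ f x (Pi.single μ 1)

/-- Poisson bracket associated to a bivector field `P`. -/
noncomputable def pbrk {m : ℕ} (P : (Fin m → ℝ) → Fin m → Fin m → ℝ)
    (f g : (Fin m → ℝ) → ℝ) (x : Fin m → ℝ) : ℝ :=
  ∑ μ, ∑ ν, P x μ ν * pd μ f x * pd ν g x

/-- Schouten bracket `[P,P]^{λμν}`. -/
noncomputable def schouten {m : ℕ} (P : (Fin m → ℝ) → Fin m → Fin m → ℝ)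
    (l μ ν : Fin m) (x : Fin m → ℝ) : ℝ :=
  ∑ ρ, (P x ρ l * pd ρ (fun y => P y μ ν) x
      + P x ρ ν * pd ρ (fun y => P y l μ) x
      + P x ρ μ * pd ρ (fun y => P y ν l) x)

/-- Mixed Schouten bracket `[P,Q]^{λμν}`. -/
noncomputable def schoutenMixed {m : ℕ} (P Q : (Fin m → ℝ) → Fin m → Fin m → ℝ)
    (l μ ν : Fin m) (x : Fin m → ℝ) : ℝ :=
  ∑ ρ, (P x ρ l * pd ρ (fun y => Q y μ ν) x + Q x ρ l * pd ρ (fun y => P y μ ν) x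
      + P x ρ ν * pd ρ (fun y => Q y l μ) x + Q x ρ ν * pd ρ (fun y => P y l μ) x
      + P x ρ μ * pd ρ (fun y => Q y ν l) x + Q x ρ μ * pd ρ (fun y => P y ν l) x)

/-- The Poisson bivector `P` on the group `A_{4,3}`. -/
noncomputable def P43 (p12 p14 p23 : ℝ) : (Fin 4 → ℝ) → Fin 4 → Fin 4 → ℝ :=
  fun x μ ν =>
    let A := p12 * Real.exp (x 3)
    let B := p14 * Real.exp (x 3)
    !![0, A, 0, B;
       -A, 0, p23, 0;
       0, -p23, 0, 0;
       -B, 0, 0, 0] μ ν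

/-- The Poisson bivector `P'` on the group `A_{4,3}`. -/
noncomputable def P43' (p14 p23 p12' a23 a24 a33 a53 : ℝ) :
    (Fin 4 → ℝ) → Fin 4 → Fin 4 → ℝ :=
  fun x μ ν =>
    let A := Real.exp (x 3) * (p12' + a23 * x 2 + a24 * x 3 + a33 * x 2 * x 3)
    let B := a33 * Real.exp (x 3) * x 2
    let C := a33 * Real.exp (x 3) * x 3
    let D := a53 * x 2 + a33 * p23 / p14 * x 3
    !![0, A, B, C;
       -A, 0, D, 0;
       -B, -D, 0, 0;
       -C, 0, 0, 0] μ ν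

lemma pdH1 (a53 p23 a33 p14 : ℝ) (μ : Fin 4) (x : Fin 4 → ℝ) :
    pd μ (fun x => a53 * x 2 / p23 + 2 * a33 * x 3 / p14) x
    = a53 * (Pi.single μ 1 : Fin 4 → ℝ) 2 / p23
      + 2 * a33 * (Pi.single μ 1 : Fin 4 → ℝ) 3 / p14 := by
  have h2 : HasFDerivAt (fun y : Fin 4 → ℝ => y 2)
      (ContinuousLinearMap.proj (R := ℝ) (φ := fun _ : Fin 4 => ℝ) 2) x :=
    hasFDerivAt_apply 2 x
  have h3 : HasFDerivAt (fun y : Fin 4 → ℝ => y 3)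
      (ContinuousLinearMap.proj (R := ℝ) (φ := fun _ : Fin 4 => ℝ) 3) x :=
    hasFDerivAt_apply 3 x
  have hH1 : HasFDerivAt (fun y : Fin 4 → ℝ => a53 * y 2 / p23 + 2 * a33 * y 3 / p14)
      (p23⁻¹ • (a53 • ContinuousLinearMap.proj (R := ℝ) (φ := fun _ : Fin 4 => ℝ) 2)
        + p14⁻¹ • ((2*a33) • ContinuousLinearMap.proj (R := ℝ) (φ := fun _ : Fin 4 => ℝ) 3)) x :=
    ((h2.const_mul a53).mul_const p23⁻¹).add ((h3.const_mul (2*a33)).mul_const p14⁻¹)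
  unfold pd
  rw [hH1.fderiv]
  simp [ContinuousLinearMap.proj_apply]
  ring

lemma pdH2 (a53 p23 a33 p14 : ℝ) (μ : Fin 4) (x : Fin 4 → ℝ) :
    pd μ (fun x => (1 / 2) * (a33 ^ 2 * (x 3) ^ 2 / p14 ^ 2
        + (a53 * x 2 / p23 + a33 * x 3 / p14) ^ 2)) x
    = (1 / 2) * (a33 ^ 2 * (2 * x 3 * (Pi.single μ 1 : Fin 4 → ℝ) 3) / p14 ^ 2
        + 2 * (a53 * x 2 / p23 + a33 * x 3 / p14)
          * (a53 * (Pi.single μ 1 : Fin 4 → ℝ) 2 / p23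
            + a33 * (Pi.single μ 1 : Fin 4 → ℝ) 3 / p14)) := by
  have h2 : HasFDerivAt (fun y : Fin 4 → ℝ => y 2)
      (ContinuousLinearMap.proj (R := ℝ) (φ := fun _ : Fin 4 => ℝ) 2) x :=
    hasFDerivAt_apply 2 x
  have h3 : HasFDerivAt (fun y : Fin 4 → ℝ => y 3)
      (ContinuousLinearMap.proj (R := ℝ) (φ := fun _ : Fin 4 => ℝ) 3) x :=
    hasFDerivAt_apply 3 x
  have hu : HasFDerivAt (fun y : Fin 4 → ℝ => a53 * y 2 / p23 + a33 * y 3 / p14)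
      (p23⁻¹ • (a53 • ContinuousLinearMap.proj (R := ℝ) (φ := fun _ : Fin 4 => ℝ) 2)
        + p14⁻¹ • (a33 • ContinuousLinearMap.proj (R := ℝ) (φ := fun _ : Fin 4 => ℝ) 3)) x :=
    ((h2.const_mul a53).mul_const p23⁻¹).add ((h3.const_mul a33).mul_const p14⁻¹)
  have hsq3 := (hasDerivAt_pow 2 (x 3)).comp_hasFDerivAt x h3
  have hsqu := (hasDerivAt_pow 2 (a53 * x 2 / p23 + a33 * x 3 / p14)).comp_hasFDerivAt x hu
  have hH2 := (((hsq3.const_mul (a33^2)).mul_const ((p14^2)⁻¹)).add hsqu).const_mul ((1:ℝ)/2)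
  have key : fderiv ℝ (fun x : Fin 4 → ℝ => (1 / 2) * (a33 ^ 2 * (x 3) ^ 2 / p14 ^ 2
        + (a53 * x 2 / p23 + a33 * x 3 / p14) ^ 2)) x = _ := hH2.fderiv
  unfold pd
  rw [key]
  simp [ContinuousLinearMap.proj_apply]
  ring


theorem A43_bi_involution (p12 p14 p23 p12' a23 a24 a33 a53 : ℝ)
    (hne : p14 * p23 ≠ 0) :
    let H1 : (Fin 4 → ℝ) → ℝ := fun x => a53 * x 2 / p23 + 2 * a33 * x 3 / p14
    let H2 : (Fin 4 → ℝ) → ℝ := fun x =>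
      (1 / 2) * (a33 ^ 2 * (x 3) ^ 2 / p14 ^ 2
        + (a53 * x 2 / p23 + a33 * x 3 / p14) ^ 2)
    (∀ x, pbrk (P43 p12 p14 p23) H1 H2 x = 0) ∧
    (∀ x, pbrk (P43' p14 p23 p12' a23 a24 a33 a53) H1 H2 x = 0) := by
  intro H1 H2
  constructor <;> intro x <;>
    · unfold pbrk
      simp only [P43, P43', H1, H2]
      simp only [Fin.sum_univ_four, pdH1, pdH2, Matrix.of_apply, Matrix.cons_val, Matrix.cons_val', Matrix.cons_val_zero,
        Matrix.cons_val_one, Matrix.head_cons, Matrix.empty_val', Matrix.cons_val_fin_one,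
        Matrix.head_fin_const, Matrix.cons_val_two, Matrix.cons_val_three, Matrix.tail_cons,
        Pi.single_apply]
      norm_num [Matrix.vecHead, Matrix.vecTail, show ((2:Fin 4) = 0) ↔ False from by decide,
        show ((2:Fin 4) = 1) ↔ False from by decide, show ((2:Fin 4) = 3) ↔ False from by decide,
        show ((3:Fin 4) = 0) ↔ False from by decide, show ((3:Fin 4) = 1) ↔ False from by decide,
        show ((3:Fin 4) = 2) ↔ False from by decide]
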